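/- There exist α ∈ Z_p ∖ {0, 1, …, Δ+1}, a tuple (β_{e_1}, …, β_{e_m}) with each β_{e_i} ∈ {1, 2, …, Δ+1, α} and C^{P'}(β_{e_1}, …, β_{e_m}) ≠ 0 in Z_p, and a tuple (β_{v_1}, …, β_{v_n}) with each β_{v_i} ∈ {1, 2, …, Δ+1} such that P(β_{v_1}, …, β_{v_n}, β_{e_1}, …, β_{e_m}) ≠ 0 in Z_p. -/

import Mathlib

open MvPolynomial
open scoped Classical

noncomputable section

/-- Exponent reduction implementing Fermat's relation `x^p ≡ x`:
`0 ↦ 0` and `k ↦ ((k-1) mod (p-1)) + 1` for `k ≥ 1`. -/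
def fermatExp (p k : ℕ) : ℕ := if k = 0 then 0 else (k - 1) % (p - 1) + 1

lemma fermatExp_zero (p : ℕ) : fermatExp p 0 = 0 := by simp [fermatExp]

/-- The Fermat reduction `F'` of a multivariate polynomial over `Z_p`: every exponent is
reduced using `x^p ≡ x`, so that the result has degree `≤ p-1` in each variable. -/
def fermatReduce {σ : Type*} (p : ℕ) (F : MvPolynomial σ (ZMod p)) : MvPolynomial σ (ZMod p) :=
  F.support.sum fun d => monomial (d.mapRange (fermatExp p) (fermatExp_zero p)) (F.coeff d)

/-- Univariate Fermat reduction. -/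
def fermatReduceUni (p : ℕ) (f : Polynomial (ZMod p)) : Polynomial (ZMod p) :=
  f.support.sum fun k => Polynomial.monomial (fermatExp p k) (f.coeff k)

/-- `N_e(v_i)`: the edges incident to the vertex `i`. -/
def incidentE {n m : ℕ} (ed : Fin m → Sym2 (Fin n)) (i : Fin n) : Finset (Fin m) :=
  Finset.univ.filter fun k => i ∈ ed k

/-- `N_i(v_i)`: the neighbours of `v_i` other than `v_1, …, v_{i-1}`. -/
def laterNbrs {n m : ℕ} (ed : Fin m → Sym2 (Fin n)) (i : Fin n) : Finset (Fin n) :=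
  Finset.univ.filter fun j => (∃ k, ed k = s(i, j)) ∧ ¬ j < i

/-- `N_i(e_i)`: the edges sharing an endpoint with `e_i`, other than `e_1, …, e_{i-1}`. -/
def laterAdjE {n m : ℕ} (ed : Fin m → Sym2 (Fin n)) (k : Fin m) : Finset (Fin m) :=
  Finset.univ.filter fun l => (l ≠ k ∧ ∃ x, x ∈ ed k ∧ x ∈ ed l) ∧ ¬ l < k

/-- The polynomial `P` (vertex variables are `Sum.inl`, edge variables are `Sum.inr`). -/
def Ppoly (n m Δ p : ℕ) (ed : Fin m → Sym2 (Fin n)) : MvPolynomial (Fin n ⊕ Fin m) (ZMod p) :=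
  ∏ i : Fin n,
    ((∏ j ∈ laterNbrs ed i, (X (Sum.inl i) - X (Sum.inl j))) *
      (∏ k ∈ incidentE ed i, (X (Sum.inl i) - X (Sum.inr k))) *
      (∏ l ∈ Finset.Icc (Δ + 2) p, (X (Sum.inl i) - C (l : ZMod p))))

/-- The coefficient of the vertex-monomial `∏ v_j ^ (d j)` of `F`, as a polynomial in the
edge variables. -/
def vCoeff {n m p : ℕ} (F : MvPolynomial (Fin n ⊕ Fin m) (ZMod p)) (d : Fin n →₀ ℕ) :
    MvPolynomial (Fin m) (ZMod p) :=
  ((sumAlgEquiv (ZMod p) (Fin n) (Fin m)) F).coeff d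

/-- The colour set `K = {1, …, Δ+1} ∪ {α} ⊆ Z_p`. -/
def colorSet (Δ p : ℕ) (α : ZMod p) : Finset (ZMod p) :=
  insert α ((Finset.Icc 1 (Δ + 1)).image fun l : ℕ => (l : ZMod p))

/-- The polynomial `E^k`. -/
def Epoly {n m : ℕ} (Δ p : ℕ) [NeZero p] (ed : Fin m → Sym2 (Fin n)) (α : ZMod p) (k : Fin m) :
    MvPolynomial (Fin m) (ZMod p) :=
  (∏ l ∈ laterAdjE ed k, (X k - X l)) *
    (∏ c ∈ Finset.univ \ colorSet Δ p α, (X k - C c))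

/-- `Q_i = C^{P'} · E^1 ⋯ E^i`; here `i` is the number of edge factors, so `Qpoly … i`
is the paper's `Q_i` (and `Qpoly … 0 = C^{P'}`). -/
def Qpoly {n m : ℕ} (Δ p : ℕ) [NeZero p] (ed : Fin m → Sym2 (Fin n)) (α : ZMod p)
    (CP : MvPolynomial (Fin m) (ZMod p)) (i : ℕ) : MvPolynomial (Fin m) (ZMod p) :=
  CP * ∏ k ∈ Finset.univ.filter (fun k : Fin m => (k : ℕ) < i), Epoly Δ p ed α k

/-- Fermat reduction in all variables except the variable `j`. -/
def fermatReduceExcept {m : ℕ} (p : ℕ) (j : Fin m) (F : MvPolynomial (Fin m) (ZMod p)) :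
    MvPolynomial (Fin m) (ZMod p) :=
  F.support.sum fun d =>
    monomial (Finsupp.filter (fun k => k = j) d +
      Finsupp.mapRange (fermatExp p) (fermatExp_zero p) (Finsupp.filter (fun k => k ≠ j) d))
      (F.coeff d)

/-- Given an exponent vector `d0` for the variables other than `j`, the coefficient in `F` of the
monomial `∏_{k ≠ j} X_k ^ (d0 k)`, as a univariate polynomial in the variable `j`. -/
def coeffAt {m p : ℕ} (j : Fin m) (d0 : Fin m →₀ ℕ) (F : MvPolynomial (Fin m) (ZMod p)) :
    Polynomial (ZMod p) :=
  (F.support.filter fun d => ∀ k, k ≠ j → d k = d0 k).sum fun d =>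
    Polynomial.monomial (d j) (F.coeff d)



/-! ### Auxiliary lemmas -/

section Alon

variable {K : Type*} [Field K]

lemma exists_eval_ne_zero_uni (f : Polynomial K) (hf : f ≠ 0) (S : Finset K)
    (h : f.natDegree < S.card) : ∃ y ∈ S, Polynomial.eval y f ≠ 0 := by
  by_contra hc
  push_neg at hc
  have hsub : S.val ⊆ f.roots := by
    intro y hy
    rw [Polynomial.mem_roots hf]
    exact hc y hy
  exact absurd (Polynomial.card_le_degree_of_subset_roots hsub) (by omega)

/-- Alon's combinatorial lemma: a nonzero polynomial whose degree in each variable is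
less than the size of the corresponding grid has a nonvanishing point on the grid. -/
lemma alon_lemma : ∀ (N : ℕ) (F : MvPolynomial (Fin N) K) (S : Fin N → Finset K),
    F ≠ 0 → (∀ i, F.degreeOf i < (S i).card) →
    ∃ x : Fin N → K, (∀ i, x i ∈ S i) ∧ eval x F ≠ 0 := by
  intro N
  induction N with
  | zero =>
    intro F S hF _
    obtain ⟨a, rfl⟩ := C_surjective (Fin 0) F
    refine ⟨finZeroElim, fun i => i.elim0, ?_⟩
    have ha : a ≠ 0 := fun h => hF (by rw [h, map_zero])
    simpa using ha
  | succ N ih =>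
    intro F S hF hdeg
    set g := finSuccEquiv K N F with hgdef
    have hg : g ≠ 0 := fun h0 => hF (by
      have := congrArg (finSuccEquiv K N).symm h0
      simpa [hgdef] using this)
    have hlc : g.leadingCoeff ≠ 0 := Polynomial.leadingCoeff_ne_zero.mpr hg
    obtain ⟨x, hxS, hx⟩ := ih g.leadingCoeff (fun j => S j.succ) hlc
      (fun j => lt_of_le_of_lt (degreeOf_coeff_finSuccEquiv F j g.natDegree) (hdeg j.succ))
    set h := g.map (eval x) with hhdef
    have hco : Polynomial.coeff h g.natDegree ≠ 0 := by
      rw [hhdef, Polynomial.coeff_map]; exact hx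
    have hh : h ≠ 0 := fun h0 => hco (by rw [h0, Polynomial.coeff_zero])
    have hdh : h.natDegree < (S 0).card := by
      refine lt_of_le_of_lt Polynomial.natDegree_map_le ?_
      rw [hgdef, natDegree_finSuccEquiv]
      exact hdeg 0
    obtain ⟨y, hyS, hy⟩ := exists_eval_ne_zero_uni h hh (S 0) hdh
    refine ⟨Fin.cons y x, fun i => ?_, ?_⟩
    · refine Fin.cases ?_ (fun j => ?_) i
      · simpa using hyS
      · simpa using hxS j
    · rw [eval_eq_eval_mv_eval']
      exact hy

end Alon

section SumToIter

variable {R : Type*} [CommSemiring R] {n m : ℕ}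

lemma monomial_eq_prod_univ {σ : Type*} [Fintype σ] (d : σ →₀ ℕ) (a : R) :
    (monomial d a : MvPolynomial σ R) = C a * ∏ i, X i ^ d i := by
  rw [monomial_eq, Finsupp.prod_fintype]
  intro j
  exact pow_zero _

lemma degreeOf_monomial_le {σ : Type*} (d : σ →₀ ℕ) (a : R) (j : σ) :
    degreeOf j (monomial d a : MvPolynomial σ R) ≤ d j := by
  refine degreeOf_le_iff.mpr fun u hu => ?_
  classical
  rw [support_monomial] at hu
  split at hu
  · simp at hu
  · rw [Finset.mem_singleton] at hu
    subst hu
    exact le_rfl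

lemma sumToIter_monomial (u : Fin n ⊕ Fin m →₀ ℕ) (c : R) :
    sumToIter R (Fin n) (Fin m) (monomial u c) =
      monomial (Finsupp.equivFunOnFinite.symm fun i => u (Sum.inl i))
        (monomial (Finsupp.equivFunOnFinite.symm fun k => u (Sum.inr k)) c) := by
  rw [monomial_eq_prod_univ, monomial_eq_prod_univ, monomial_eq_prod_univ, map_mul,
    sumToIter_C, map_prod]
  rw [Fintype.prod_sum_type]
  simp only [map_pow, sumToIter_Xl, sumToIter_Xr, Finsupp.coe_equivFunOnFinite_symm,
    map_mul, map_prod]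
  ring

lemma degreeOf_coeff_sumToIter (F : MvPolynomial (Fin n ⊕ Fin m) R) (d : Fin n →₀ ℕ)
    (k : Fin m) :
    degreeOf k ((sumToIter R (Fin n) (Fin m) F).coeff d) ≤ degreeOf (Sum.inr k) F := by
  conv_lhs => rw [F.as_sum, map_sum, MvPolynomial.coeff_sum]
  refine (degreeOf_sum_le _ _ _).trans (Finset.sup_le fun u hu => ?_)
  rw [sumToIter_monomial, coeff_monomial]
  split
  · refine (degreeOf_monomial_le _ _ _).trans ?_
    simpa using monomial_le_degreeOf (Sum.inr k) hu
  · simp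

lemma degreeOf_sumToIter (F : MvPolynomial (Fin n ⊕ Fin m) R) (i : Fin n) :
    degreeOf i (sumToIter R (Fin n) (Fin m) F) ≤ degreeOf (Sum.inl i) F := by
  conv_lhs => rw [F.as_sum, map_sum]
  refine (degreeOf_sum_le _ _ _).trans (Finset.sup_le fun u hu => ?_)
  rw [sumToIter_monomial]
  refine (degreeOf_monomial_le _ _ _).trans ?_
  simpa using monomial_le_degreeOf (Sum.inl i) hu

lemma degreeOf_map_le {S : Type*} [CommSemiring S] {σ : Type*} (f : R →+* S)
    (F : MvPolynomial σ R) (j : σ) : degreeOf j (F.map f) ≤ degreeOf j F :=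
  degreeOf_le_iff.mpr fun u hu => monomial_le_degreeOf j (support_map_subset f F hu)

lemma eval_map_sumToIter {R' : Type*} [CommRing R'] (βv : Fin n → R') (βe : Fin m → R')
    (F : MvPolynomial (Fin n ⊕ Fin m) R') :
    eval βv (MvPolynomial.map (eval βe) (sumToIter R' (Fin n) (Fin m) F)) =
      eval (Sum.elim βv βe) F := by
  have h : ((eval βv).comp ((MvPolynomial.map (eval βe)).comp
      (sumToIter R' (Fin n) (Fin m)))) = eval (Sum.elim βv βe) := by
    apply MvPolynomial.ringHom_ext
    · intro a
      simp [sumToIter_C]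
    · rintro (i | k) <;> simp [sumToIter_Xl, sumToIter_Xr]
  exact DFunLike.congr_fun h F

end SumToIter

section Fermat

lemma fermatExp_le (p k : ℕ) : fermatExp p k ≤ k := by
  unfold fermatExp
  split
  · omega
  · have := Nat.mod_le (k - 1) (p - 1)
    omega

lemma fermatExp_le_pred (p k : ℕ) (hp : 2 ≤ p) : fermatExp p k ≤ p - 1 := by
  unfold fermatExp
  split
  · omega
  · have : (k - 1) % (p - 1) < p - 1 := Nat.mod_lt _ (by omega)
    omega

lemma pow_fermatExp (p : ℕ) [Fact p.Prime] (a : ZMod p) (k : ℕ) :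
    a ^ fermatExp p k = a ^ k := by
  unfold fermatExp
  split
  · rename_i hk
    rw [hk]
  · rename_i hk
    by_cases ha : a = 0
    · subst ha
      rw [zero_pow (by omega), zero_pow hk]
    · have h1 : a ^ (p - 1) = 1 := ZMod.pow_card_sub_one_eq_one ha
      obtain ⟨t, rfl⟩ : ∃ t, k = t + 1 := ⟨k - 1, by omega⟩
      simp only [Nat.add_sub_cancel]
      rw [pow_succ, pow_succ]
      congr 1
      conv_rhs => rw [← Nat.div_add_mod t (p - 1)]
      rw [pow_add, pow_mul, h1, one_pow, one_mul]

lemma eval_fermatReduce {σ : Type*} (p : ℕ) [Fact p.Prime] (x : σ → ZMod p)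
    (F : MvPolynomial σ (ZMod p)) : eval x (fermatReduce p F) = eval x F := by
  rw [fermatReduce, map_sum]
  conv_rhs => rw [F.as_sum, map_sum]
  refine Finset.sum_congr rfl fun u hu => ?_
  rw [eval_monomial, eval_monomial]
  congr 1
  rw [Finsupp.prod_mapRange_index (fun j => pow_zero _)]
  exact Finsupp.prod_congr fun j _ => pow_fermatExp p (x j) (u j)

lemma degreeOf_fermatReduce_le {σ : Type*} (p : ℕ) (F : MvPolynomial σ (ZMod p)) (j : σ)
    (b : ℕ) (hb : ∀ u ∈ F.support, fermatExp p (u j) ≤ b) :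
    degreeOf j (fermatReduce p F) ≤ b := by
  rw [fermatReduce]
  refine (degreeOf_sum_le _ _ _).trans (Finset.sup_le fun u hu => ?_)
  refine (degreeOf_monomial_le _ _ _).trans ?_
  rw [Finsupp.mapRange_apply]
  exact hb u hu

end Fermat

section PpolyDeg

lemma card_mem_sym2_le {α : Type*} [Fintype α] [DecidableEq α] (z : Sym2 α) :
    (Finset.univ.filter fun x => x ∈ z).card ≤ 2 := by
  obtain ⟨⟨a, b⟩, rfl⟩ := z.exists_rep
  refine (Finset.card_le_card fun x hx => ?_).trans ((Finset.card_insert_le a {b}).trans (by simp))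
  rw [Finset.mem_filter] at hx
  rcases Sym2.mem_iff.mp hx.2 with h | h <;> simp [h]

lemma degreeOf_Ppoly_le (n m Δ p : ℕ) [Fact p.Prime] (ed : Fin m → Sym2 (Fin n)) (k : Fin m) :
    degreeOf (Sum.inr k) (Ppoly n m Δ p ed) ≤ 2 := by
  have hp2 : 2 ≤ p := (Fact.out : p.Prime).two_le
  have : Nontrivial (ZMod p) := by
    have : Fact (1 < p) := ⟨by omega⟩
    infer_instance
  have hfac : ∀ i : Fin n, degreeOf (Sum.inr k)
      ((∏ j ∈ laterNbrs ed i, (X (Sum.inl i) - X (Sum.inl j))) *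
        (∏ k' ∈ incidentE ed i, (X (Sum.inl i) - X (Sum.inr k')))
        * (∏ l ∈ Finset.Icc (Δ + 2) p, (X (Sum.inl i) - C (l : ZMod p)))
        : MvPolynomial (Fin n ⊕ Fin m) (ZMod p)) ≤
      if k ∈ incidentE ed i then 1 else 0 := by
    intro i
    have hA : degreeOf (Sum.inr k)
        ((∏ j ∈ laterNbrs ed i, (X (Sum.inl i) - X (Sum.inl j)))
          : MvPolynomial (Fin n ⊕ Fin m) (ZMod p)) ≤ 0 := by
      refine (degreeOf_prod_le _ _ _).trans (le_of_eq (Finset.sum_eq_zero fun j _ => ?_))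
      have := degreeOf_sub_le (Sum.inr k) (X (Sum.inl i) : MvPolynomial (Fin n ⊕ Fin m) (ZMod p))
        (X (Sum.inl j))
      rw [degreeOf_X, degreeOf_X] at this
      simpa using this
    have hC : degreeOf (Sum.inr k)
        ((∏ l ∈ Finset.Icc (Δ + 2) p, (X (Sum.inl i) - C (l : ZMod p)))
          : MvPolynomial (Fin n ⊕ Fin m) (ZMod p)) ≤ 0 := by
      refine (degreeOf_prod_le _ _ _).trans (le_of_eq (Finset.sum_eq_zero fun l _ => ?_))
      have := degreeOf_sub_le (Sum.inr k) (X (Sum.inl i) : MvPolynomial (Fin n ⊕ Fin m) (ZMod p))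
        (C (l : ZMod p))
      rw [degreeOf_X, degreeOf_C] at this
      simpa using this
    have hB : degreeOf (Sum.inr k)
        ((∏ k' ∈ incidentE ed i, (X (Sum.inl i) - X (Sum.inr k')))
          : MvPolynomial (Fin n ⊕ Fin m) (ZMod p)) ≤
        if k ∈ incidentE ed i then 1 else 0 := by
      refine (degreeOf_prod_le _ _ _).trans ?_
      have hone : ∀ k' ∈ incidentE ed i,
          degreeOf (Sum.inr k) ((X (Sum.inl i) - X (Sum.inr k'))
            : MvPolynomial (Fin n ⊕ Fin m) (ZMod p)) ≤ if k' = k then 1 else 0 := by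
        intro k' _
        have := degreeOf_sub_le (Sum.inr k)
          (X (Sum.inl i) : MvPolynomial (Fin n ⊕ Fin m) (ZMod p)) (X (Sum.inr k'))
        rw [degreeOf_X, degreeOf_X] at this
        refine this.trans ?_
        rcases eq_or_ne k' k with rfl | h
        · simp
        · simp [h, Ne.symm h]
      refine (Finset.sum_le_sum hone).trans ?_
      rw [Finset.sum_ite_eq' (incidentE ed i) k (fun _ => 1)]
    calc degreeOf (Sum.inr k) _ ≤ _ + _ + _ :=
          (degreeOf_mul_le _ _ _).trans (add_le_add (degreeOf_mul_le _ _ _) le_rfl)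
      _ ≤ 0 + (if k ∈ incidentE ed i then 1 else 0) + 0 :=
          add_le_add (add_le_add hA hB) hC
      _ = if k ∈ incidentE ed i then 1 else 0 := by omega
  refine (degreeOf_prod_le _ _ _).trans ((Finset.sum_le_sum fun i _ => hfac i).trans ?_)
  have : (∑ i : Fin n, if k ∈ incidentE ed i then 1 else 0)
      = (Finset.univ.filter fun i : Fin n => i ∈ ed k).card := by
    rw [Finset.card_filter]
    refine Finset.sum_congr rfl fun i _ => ?_
    congr 1
    · simp [incidentE]
  rw [this]
  exact card_mem_sym2_le (ed k)

end PpolyDeg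


/-- Theorem 3.14 of the paper. There exist `α ∈ Z_p ∖ {0, 1, …, Δ+1}`, a
tuple `β_e` of edge values in `{1, …, Δ+1, α}` with `C^{P'}(β_e) ≠ 0`, and a tuple `β_v` of
vertex values in `{1, …, Δ+1}`, such that `P(β_v, β_e) ≠ 0` in `Z_p`. -/
theorem statement10 (n m Δ p : ℕ) [Fact p.Prime]
    (hm : 1 ≤ m) (hp : m ^ 2 * (2 * Δ + 2) ≤ p)
    (ed : Fin m → Sym2 (Fin n)) (hinj : Function.Injective ed)
    (hsimple : ∀ k, ¬ (ed k).IsDiag)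
    (hΔ : ∀ i, (incidentE ed i).card ≤ Δ)
    (hΔmax : ∃ i, (incidentE ed i).card = Δ)
    (d : Fin n →₀ ℕ) (CP : MvPolynomial (Fin m) (ZMod p))
    (hCP : CP = vCoeff (fermatReduce p (Ppoly n m Δ p ed)) d) (hCP0 : CP ≠ 0) :
    ∃ α : ZMod p,
      α ∉ ((Finset.range (Δ + 2)).image fun l : ℕ => (l : ZMod p)) ∧
      ∃ βe : Fin m → ZMod p,
        (∀ j, βe j ∈ colorSet Δ p α) ∧
        eval βe CP ≠ 0 ∧
        ∃ βv : Fin n → ZMod p,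
          (∀ i, βv i ∈ (Finset.Icc 1 (Δ + 1)).image fun l : ℕ => (l : ZMod p)) ∧
          eval (Sum.elim βv βe) (Ppoly n m Δ p ed) ≠ 0 := by
  classical
  have hpp : p.Prime := Fact.out
  have hp2 : 2 ≤ p := hpp.two_le
  have hΔ1 : 1 ≤ Δ := by
    set k0 : Fin m := ⟨0, hm⟩
    have hx : (ed k0).out.1 ∈ ed k0 := Sym2.out_fst_mem _
    have h1 : k0 ∈ incidentE ed (ed k0).out.1 := by simp [incidentE, hx]
    have h2 := hΔ (ed k0).out.1
    have h3 : 0 < (incidentE ed (ed k0).out.1).card := Finset.card_pos.mpr ⟨k0, h1⟩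
    omega
  have hmsq : 1 ≤ m ^ 2 := Nat.one_le_pow 2 m hm
  have hm2 : 2 * Δ + 2 ≤ p := le_trans (by nlinarith) hp
  have hΔ2p : Δ + 2 < p := by omega
  have hcast_inj : ∀ a b : ℕ, a < p → b < p → (a : ZMod p) = (b : ZMod p) → a = b := by
    intro a b ha hb h
    have := congrArg ZMod.val h
    rwa [ZMod.val_cast_of_lt ha, ZMod.val_cast_of_lt hb] at this
  set α : ZMod p := ((Δ + 2 : ℕ) : ZMod p) with hαdef
  have hαmem : α ∉ (Finset.range (Δ + 2)).image (fun l : ℕ => (l : ZMod p)) := by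
    simp only [Finset.mem_image, Finset.mem_range]
    rintro ⟨l, hl, hle⟩
    have := hcast_inj l (Δ + 2) (by omega) hΔ2p hle
    omega
  have hαS0 : α ∉ (Finset.Icc 1 (Δ + 1)).image (fun l : ℕ => (l : ZMod p)) := by
    simp only [Finset.mem_image, Finset.mem_Icc]
    rintro ⟨l, hl, hle⟩
    have := hcast_inj l (Δ + 2) (by omega) hΔ2p hle
    omega
  have hcolor : (colorSet Δ p α).card = Δ + 2 := by
    rw [colorSet, Finset.card_insert_of_notMem hαS0,
      Finset.card_image_of_injOn, Nat.card_Icc]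
    · omega
    · intro a ha b hb hab
      rw [Finset.coe_Icc, Set.mem_Icc] at ha hb
      exact hcast_inj a b (by omega) (by omega) hab
  have hbridge : ∀ F : MvPolynomial (Fin n ⊕ Fin m) (ZMod p),
      (sumAlgEquiv (ZMod p) (Fin n) (Fin m)) F = sumToIter (ZMod p) (Fin n) (Fin m) F := by
    intro F
    have h : ((sumAlgEquiv (ZMod p) (Fin n) (Fin m)).toRingHom : MvPolynomial (Fin n ⊕ Fin m) (ZMod p) →+* _)
        = sumToIter (ZMod p) (Fin n) (Fin m) := by
      apply MvPolynomial.ringHom_ext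
      · intro a
        simp [sumToIter_C]
      · rintro (i | k) <;> simp [sumToIter_Xl, sumToIter_Xr]
    exact DFunLike.congr_fun h F
  have hdegCP : ∀ k : Fin m, degreeOf k CP ≤ 2 := by
    intro k
    rw [hCP, vCoeff, hbridge]
    refine (degreeOf_coeff_sumToIter _ _ _).trans ?_
    refine degreeOf_fermatReduce_le _ _ _ _ (fun u hu => ?_)
    exact le_trans (fermatExp_le _ _) (le_trans (monomial_le_degreeOf _ hu)
      (degreeOf_Ppoly_le n m Δ p ed k))
  obtain ⟨βe, hβeS, hβe⟩ := alon_lemma m CP (fun _ => colorSet Δ p α) hCP0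
    (fun k => by rw [hcolor]; exact lt_of_le_of_lt (hdegCP k) (by omega))
  set P' := fermatReduce p (Ppoly n m Δ p ed) with hP'
  set H := MvPolynomial.map (eval βe) (sumToIter (ZMod p) (Fin n) (Fin m) P') with hH
  have hHd : coeff d H = eval βe CP := by
    rw [hH, MvPolynomial.coeff_map, hCP, vCoeff, hbridge]
  have hH0 : H ≠ 0 := fun h0 => hβe (by rw [← hHd, h0, coeff_zero])
  have hdegH : ∀ i : Fin n, degreeOf i H < (Finset.univ : Finset (ZMod p)).card := by
    intro i
    have h1 : degreeOf i H ≤ degreeOf (Sum.inl i) P' :=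
      le_trans (degreeOf_map_le _ _ _) (degreeOf_sumToIter _ _)
    have h2 : degreeOf (Sum.inl i) P' ≤ p - 1 :=
      degreeOf_fermatReduce_le _ _ _ _ (fun u _ => fermatExp_le_pred _ _ hp2)
    rw [Finset.card_univ, ZMod.card]
    omega
  obtain ⟨βv, -, hβv⟩ := alon_lemma n H (fun _ => Finset.univ) hH0 hdegH
  have hPeval : eval (Sum.elim βv βe) (Ppoly n m Δ p ed) ≠ 0 := by
    rw [hH, eval_map_sumToIter] at hβv
    rwa [hP', eval_fermatReduce] at hβv
  refine ⟨α, hαmem, βe, hβeS, hβe, βv, fun i => ?_, hPeval⟩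
  have hfac : ∀ l ∈ Finset.Icc (Δ + 2) p, βv i ≠ (l : ZMod p) := by
    intro l hl heq
    apply hPeval
    rw [Ppoly, map_prod]
    refine Finset.prod_eq_zero (Finset.mem_univ i) ?_
    rw [map_mul]
    refine mul_eq_zero_of_right _ ?_
    rw [map_prod]
    refine Finset.prod_eq_zero hl ?_
    simp only [map_sub, eval_X, eval_C, Sum.elim_inl, heq, sub_self]
  have hvlt : (βv i).val < p := ZMod.val_lt _
  have hvcast : (((βv i).val : ℕ) : ZMod p) = βv i := ZMod.natCast_rightInverse (βv i)
  have hv0 : (βv i).val ≠ 0 := by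
    intro h0
    refine hfac p (Finset.mem_Icc.mpr ⟨by omega, le_rfl⟩) ?_
    rw [ZMod.natCast_self]
    rw [← hvcast, h0, Nat.cast_zero]
  have hvle : (βv i).val ≤ Δ + 1 := by
    by_contra hgt
    exact hfac (βv i).val (Finset.mem_Icc.mpr ⟨by omega, by omega⟩) hvcast.symm
  exact Finset.mem_image.mpr ⟨(βv i).val, Finset.mem_Icc.mpr ⟨by omega, hvle⟩, hvcast⟩

end
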